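/- For a signed seminorm ||·||^sgn on V over a trivially valued real closed field and a closed interval [a,b] ⊆ ℝ, the set L = (||·||^sgn)^{-1}([a,b]) ∪ {0} is a convex cone in V; moreover, if b ≥ 0 and a = −b, then L is a K-subspace of V. -/

import Mathlib

noncomputable section

variable {K : Type*} [Field K] [LinearOrder K] [IsStrictOrderedRing K] {V : Type*} [AddCommGroup V] [Module K V]

/-- The sign of an element of a linear ordered field, as a real number. -/
def sgn (x : K) : ℝ := if 0 < x then 1 else if x < 0 then -1 else 0

/-- The trivial absolute value. -/
def trivabs (x : K) : ℝ := if x = 0 then 0 else 1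

/-- `K` is real closed. -/
def IsRealClosed' (K : Type*) [Field K] [LinearOrder K] [IsStrictOrderedRing K] : Prop :=
  (∀ x : K, 0 ≤ x → ∃ y, y * y = x) ∧
  ∀ p : Polynomial K, Odd p.natDegree → ∃ x, p.eval x = 0

/-- A signed seminorm on `V` with respect to the trivial absolute value on `K`
(note `sgn c * trivabs c = sgn c`). -/
def IsSignedSeminormTriv (N : V → ℝ) : Prop :=
  (∀ (c : K) (v : V), N (c • v) = sgn c * N v) ∧
  (∀ v w : V, min (N v) (N w) ≤ N (v + w) ∧ N (v + w) ≤ max (N v) (N w))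


lemma sgn_of_pos {x : K} (h : 0 < x) : sgn x = 1 := if_pos h

lemma sgn_of_neg {x : K} (h : x < 0) : sgn x = -1 := by
  unfold sgn; rw [if_neg (not_lt.mpr h.le), if_pos h]

/-- The preimage of a closed interval under a signed seminorm (together with 0)
is a convex cone; if moreover `b ≥ 0` and `a = -b` it is a subspace. -/
theorem signedSeminorm_preimage_Icc_convexCone
    (hK : IsRealClosed' K) [FiniteDimensional K V]
    (N : V → ℝ) (hN : IsSignedSeminormTriv (K := K) N) (a b : ℝ) :
    (Convex K (N ⁻¹' Set.Icc a b ∪ {0}) ∧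
      ∀ (t : K), 0 < t → ∀ v ∈ N ⁻¹' Set.Icc a b ∪ {0}, t • v ∈ N ⁻¹' Set.Icc a b ∪ {0}) ∧
    (0 ≤ b → a = -b → ∃ W : Submodule K V, (W : Set V) = N ⁻¹' Set.Icc a b ∪ {0}) := by
  obtain ⟨hsmul, hadd⟩ := hN
  set L := N ⁻¹' Set.Icc a b ∪ {0} with hL
  have hmem : ∀ v, v ∈ L ↔ (a ≤ N v ∧ N v ≤ b) ∨ v = 0 := by
    intro v; simp [hL, Set.mem_Icc, or_comm]
  have hposmul : ∀ (t : K), 0 < t → ∀ v ∈ L, t • v ∈ L := by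
    intro t ht v hv
    rcases (hmem v).1 hv with h | h
    · exact (hmem _).2 (Or.inl (by rw [hsmul, sgn_of_pos ht, one_mul]; exact h))
    · exact (hmem _).2 (Or.inr (by rw [h, smul_zero]))
  have haddmem : ∀ v ∈ L, ∀ w ∈ L, v + w ∈ L := by
    intro v hv w hw
    rcases (hmem v).1 hv with h1 | h1
    · rcases (hmem w).1 hw with h2 | h2
      · refine (hmem _).2 (Or.inl ⟨?_, ?_⟩)
        · exact le_trans (le_min h1.1 h2.1) (hadd v w).1
        · exact le_trans (hadd v w).2 (max_le h1.2 h2.2)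
      · rw [h2, add_zero]; exact hv
    · rw [h1, zero_add]; exact hw
  refine ⟨⟨?_, hposmul⟩, ?_⟩
  · intro v hv w hw s t hs ht hst
    rcases eq_or_lt_of_le hs with hs0 | hs0
    · rw [← hs0] at hst; simp at hst
      rw [← hs0, hst]; simpa using hw
    rcases eq_or_lt_of_le ht with ht0 | ht0
    · rw [← ht0] at hst; simp at hst
      rw [← ht0, hst]; simpa using hv
    exact haddmem _ (hposmul s hs0 v hv) _ (hposmul t ht0 w hw)
  · intro hb hab
    refine ⟨{ carrier := L
              add_mem' := fun hv hw => haddmem _ hv _ hw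
              zero_mem' := (hmem 0).2 (Or.inr rfl)
              smul_mem' := ?_ }, rfl⟩
    intro c v hv
    rcases (hmem v).1 hv with h | h
    · rcases lt_trichotomy c 0 with hc | hc | hc
      · refine (hmem _).2 (Or.inl ?_)
        rw [hsmul, sgn_of_neg hc]
        constructor
        · rw [hab] at h ⊢; linarith [h.2]
        · rw [hab] at h; linarith [h.1]
      · exact (hmem _).2 (Or.inr (by rw [hc, zero_smul]))
      · exact hposmul c hc v hv
    · exact (hmem _).2 (Or.inr (by rw [h, smul_zero]))
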